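/- arXiv:2212.11723 — 6 statements merged into one kernel-verified Lean document; each statement's English description precedes it below -/
import Mathlib

section
/- Let K be a field, n = r + s - 2 with r, s ≥ 3, and let f : {(i,j) : 1 ≤ i < j ≤ n} → K be a symmetric assignment of values to the diagonals of an n-gon with vertices 1,…,n, where the vertices 1,…,r lie in a subpolygon P and the vertices r-1, r, r+1, …, r+s-2 (with r+s-2 adjacent to r-1) lie in a subpolygon Q glued to P along the diagonal {r-1, r}. Set c = f(r-1,r) and assume c ≠ 0. Assume the Ptolemy relations hold for every diagonal crossing {r-1,r}: for all 1 ≤ i ≤ r-2 and r+1 ≤ j ≤ r+s-2, c·f(i,j) = f(i,r-1)·f(r,j) + f(i,r)·f(r-1,j). Let M_f be the n×n symmetric matrix with zero diagonal and (i,j)-entry f(i,j), let M_P be the r×r matrix built the same way from the values f(i,j) for 1 ≤ i < j ≤ r, and let M_Q be the s×s matrix built from the values f(i,j) for i,j ∈ {r-1, r, r+1, …, r+s-2}. Then det(M_f) = -c^{-2} · det(M_P) · det(M_Q). -/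
lemma det_fromBlocks_schur {R : Type*} [CommRing R] {m n : Type*} [Fintype m] [DecidableEq m]
    [Fintype n] [DecidableEq n] (A : Matrix m m R) (B : Matrix m n R) (C : Matrix n m R)
    (D : Matrix n n R) (X : Matrix m n R) (h : A * X + B = 0) :
    (Matrix.fromBlocks A B C D).det = A.det * (C * X + D).det := by
  have key : Matrix.fromBlocks A B C D * Matrix.fromBlocks 1 X 0 1
      = Matrix.fromBlocks A 0 C (C * X + D) := by
    rw [Matrix.fromBlocks_multiply]
    simp [h]
  have h2 := congrArg Matrix.det key
  rw [Matrix.det_mul, Matrix.det_fromBlocks_zero₂₁, Matrix.det_fromBlocks_zero₁₂] at h2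
  simpa using h2

set_option maxHeartbeats 1000000 in
/-- Theorem 3.3 (main gluing theorem): let an `(r+s-2)`-gon `R` be glued from an
`r`-gon `P` (vertices `1,…,r`) and an `s`-gon `Q` (vertices `r-1,r,r+1,…,r+s-2`)
along the diagonal `{r-1,r}`, and let `f` be a weak frieze with respect to this
one-diagonal dissection with `f(r-1,r) ≠ 0`.  Then
`det M_f = - f(r-1,r)⁻² ⬝ det M_P ⬝ det M_Q`. -/
theorem det_glued_weak_frieze {K : Type*} [Field K] (r s : ℕ) (hr : 3 ≤ r) (hs : 3 ≤ s)
    (f : ℕ → ℕ → K)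
    (hsym : ∀ i j, f i j = f j i)
    (hc : f (r - 1) r ≠ 0)
    (hPtolemy : ∀ i j, 1 ≤ i → i ≤ r - 2 → r + 1 ≤ j → j ≤ r + s - 2 →
      f (r - 1) r * f i j = f i (r - 1) * f r j + f i r * f (r - 1) j) :
    (Matrix.of fun i j : Fin (r + s - 2) =>
        if i = j then (0 : K) else f (i.val + 1) (j.val + 1)).det
      = - (f (r - 1) r)⁻¹ ^ 2 *
        (Matrix.of fun i j : Fin r =>
            if i = j then (0 : K) else f (i.val + 1) (j.val + 1)).det *
        (Matrix.of fun i j : Fin s =>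
            if i = j then (0 : K) else f (i.val + r - 1) (j.val + r - 1)).det := by
  have hrs : r + (s - 2) = r + s - 2 := by omega
  have h2s : 2 + (s - 2) = s := by omega
  set c := f (r - 1) r with hcdef
  set t := s - 2 with htdef
  set M : Matrix (Fin (r + s - 2)) (Fin (r + s - 2)) K :=
    Matrix.of fun i j => if i = j then (0 : K) else f (i.val + 1) (j.val + 1) with hMdef
  set P : Matrix (Fin r) (Fin r) K :=
    Matrix.of fun i j => if i = j then (0 : K) else f (i.val + 1) (j.val + 1) with hPdef
  set Q : Matrix (Fin s) (Fin s) K :=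
    Matrix.of fun i j => if i = j then (0 : K) else f (i.val + r - 1) (j.val + r - 1) with hQdef
  -- index arithmetic rewrites
  have hw1 : r - 2 + 1 = r - 1 := by omega
  have hw2 : r - 1 + 1 = r := by omega
  have hw3 : (0 : ℕ) + r - 1 = r - 1 := by omega
  have hw4 : (1 : ℕ) + r - 1 = r := by omega
  have hw5 : ∀ k : Fin t, 2 + k.val + r - 1 = r + k.val + 1 := fun k => by omega
  -- equivalences
  let e : Fin r ⊕ Fin t ≃ Fin (r + s - 2) := finSumFinEquiv.trans (finCongr hrs)
  let eQ : Fin 2 ⊕ Fin t ≃ Fin s := finSumFinEquiv.trans (finCongr h2s)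
  have he1 : ∀ i : Fin r, ((e (Sum.inl i)) : ℕ) = i.val := fun i => rfl
  have he2 : ∀ k : Fin t, ((e (Sum.inr k)) : ℕ) = r + k.val := fun k => rfl
  have heq1 : ∀ i : Fin 2, ((eQ (Sum.inl i)) : ℕ) = i.val := fun i => rfl
  have heq2 : ∀ k : Fin t, ((eQ (Sum.inr k)) : ℕ) = 2 + k.val := fun k => rfl
  -- blocks
  set a : Fin r := ⟨r - 2, by omega⟩ with hadef
  set b : Fin r := ⟨r - 1, by omega⟩ with hbdef
  set B12 : Matrix (Fin r) (Fin t) K :=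
    Matrix.of fun i k => f (i.val + 1) (r + k.val + 1) with hB12
  set B21 : Matrix (Fin t) (Fin r) K :=
    Matrix.of fun k j => f (r + k.val + 1) (j.val + 1) with hB21
  set B22 : Matrix (Fin t) (Fin t) K :=
    Matrix.of fun k l => if k = l then (0 : K) else f (r + k.val + 1) (r + l.val + 1) with hB22
  set X : Matrix (Fin r) (Fin t) K :=
    Matrix.of fun j k =>
      (if j = a then -c⁻¹ * f r (r + k.val + 1) else 0)
        + (if j = b then -c⁻¹ * f (r - 1) (r + k.val + 1) else 0) with hXdef
  set Q11 : Matrix (Fin 2) (Fin 2) K :=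
    Matrix.of fun i j => if i = j then (0 : K) else f (i.val + r - 1) (j.val + r - 1) with hQ11
  set Q12 : Matrix (Fin 2) (Fin t) K :=
    Matrix.of fun i k => f (i.val + r - 1) (2 + k.val + r - 1) with hQ12
  set Q21 : Matrix (Fin t) (Fin 2) K :=
    Matrix.of fun k j => f (2 + k.val + r - 1) (j.val + r - 1) with hQ21
  set Q22 : Matrix (Fin t) (Fin t) K :=
    Matrix.of fun k l => if k = l then (0 : K) else f (2 + k.val + r - 1) (2 + l.val + r - 1) with hQ22
  set XQ : Matrix (Fin 2) (Fin t) K :=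
    Matrix.of fun i k =>
      if i = 0 then -c⁻¹ * f r (r + k.val + 1) else -c⁻¹ * f (r - 1) (r + k.val + 1) with hXQ
  -- block decomposition of M
  have Msub : M.submatrix e e = Matrix.fromBlocks P B12 B21 B22 := by
    ext i j
    cases i with
    | inl i =>
      cases j with
      | inl j =>
        simp only [Matrix.submatrix_apply, hMdef, Matrix.of_apply, Matrix.fromBlocks_apply₁₁,
          hPdef, Equiv.apply_eq_iff_eq, Sum.inl.injEq, he1]
      | inr k =>
        simp only [Matrix.submatrix_apply, hMdef, Matrix.of_apply, Matrix.fromBlocks_apply₁₂,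
          hB12, Equiv.apply_eq_iff_eq, he1, he2]
        simp
    | inr k =>
      cases j with
      | inl j =>
        simp only [Matrix.submatrix_apply, hMdef, Matrix.of_apply, Matrix.fromBlocks_apply₂₁,
          hB21, Equiv.apply_eq_iff_eq, he1, he2]
        simp
      | inr l =>
        simp only [Matrix.submatrix_apply, hMdef, Matrix.of_apply, Matrix.fromBlocks_apply₂₂,
          hB22, Equiv.apply_eq_iff_eq, Sum.inr.injEq, he2]
  -- block decomposition of Q
  have Qsub : Q.submatrix eQ eQ = Matrix.fromBlocks Q11 Q12 Q21 Q22 := by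
    ext i j
    cases i with
    | inl i =>
      cases j with
      | inl j =>
        simp only [Matrix.submatrix_apply, hQdef, Matrix.of_apply, Matrix.fromBlocks_apply₁₁,
          hQ11, Equiv.apply_eq_iff_eq, Sum.inl.injEq, heq1]
      | inr k =>
        simp only [Matrix.submatrix_apply, hQdef, Matrix.of_apply, Matrix.fromBlocks_apply₁₂,
          hQ12, Equiv.apply_eq_iff_eq, heq1, heq2]
        simp
    | inr k =>
      cases j with
      | inl j =>
        simp only [Matrix.submatrix_apply, hQdef, Matrix.of_apply, Matrix.fromBlocks_apply₂₁,
          hQ21, Equiv.apply_eq_iff_eq, heq1, heq2]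
        simp
      | inr l =>
        simp only [Matrix.submatrix_apply, hQdef, Matrix.of_apply, Matrix.fromBlocks_apply₂₂,
          hQ22, Equiv.apply_eq_iff_eq, Sum.inr.injEq, heq2]
  -- P * X + B12 = 0
  have hPX : P * X + B12 = 0 := by
    ext i k
    have hk2 : r + 1 ≤ r + k.val + 1 := by omega
    have hk3 : r + k.val + 1 ≤ r + s - 2 := by have := k.isLt; omega
    simp only [Matrix.add_apply, Matrix.mul_apply, hXdef, Matrix.of_apply, mul_add, mul_ite,
      mul_zero, Finset.sum_add_distrib, Finset.sum_ite_eq', Finset.mem_univ, if_true,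
      hB12, Matrix.zero_apply]
    rcases eq_or_ne i a with rfl | hia
    · have hab : a ≠ b := by simp [hadef, hbdef, Fin.ext_iff]; omega
      simp only [hPdef, Matrix.of_apply, if_pos rfl, if_true, if_neg hab]
      simp only [hadef, hbdef, hw1, hw2]
      rw [← hcdef]
      field_simp
      ring
    · rcases eq_or_ne i b with rfl | hib
      · have hba : b ≠ a := by simp [hadef, hbdef, Fin.ext_iff]; omega
        simp only [hPdef, Matrix.of_apply, if_pos rfl, if_true, if_neg hba]
        simp only [hadef, hbdef, hw1, hw2]
        rw [hsym r (r - 1), ← hcdef]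
        field_simp
        ring
      · have hi1 : 1 ≤ i.val + 1 := by omega
        have hi2 : i.val + 1 ≤ r - 2 := by
          have h1 : i.val ≠ r - 2 := fun h => hia (by simp [hadef, Fin.ext_iff, h])
          have h2 : i.val ≠ r - 1 := fun h => hib (by simp [hbdef, Fin.ext_iff, h])
          have := i.isLt; omega
        have hp := hPtolemy (i.val + 1) (r + k.val + 1) hi1 hi2 hk2 hk3
        simp only [hPdef, Matrix.of_apply, if_neg hia, if_neg hib]
        simp only [hadef, hbdef, hw1, hw2]
        have h' : f (i.val + 1) (r + k.val + 1)
            = c⁻¹ * (f (i.val + 1) (r - 1) * f r (r + k.val + 1)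
              + f (i.val + 1) r * f (r - 1) (r + k.val + 1)) := by
          rw [eq_inv_mul_iff_mul_eq₀ hc]
          exact hp
        rw [h']
        ring
  -- Q11 * XQ + Q12 = 0
  have hQX : Q11 * XQ + Q12 = 0 := by
    ext i k
    simp only [Matrix.add_apply, Matrix.mul_apply, Fin.sum_univ_two, hXQ, hQ11, hQ12,
      Matrix.of_apply, Matrix.zero_apply, hw5 k]
    fin_cases i
    · simp only [Fin.zero_eta, Fin.mk_one, show ((0 : Fin 2) = 1) = False from by simp,
        show ((1 : Fin 2) = 0) = False from by simp, if_false,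
        show ((0 : Fin 2) = 0) = True from by simp, if_true, Fin.val_zero, Fin.val_one,
        hw3, hw4]
      rw [← hcdef]
      field_simp
      ring
    · simp only [Fin.val_zero, Fin.val_one, hw3, hw4]
      norm_num
      rw [hsym r (r - 1), ← hcdef]
      field_simp
      ring
  -- the two Schur complements agree
  have hSchur : B21 * X + B22 = Q21 * XQ + Q22 := by
    ext k l
    simp only [Matrix.add_apply, Matrix.mul_apply, hXdef, hXQ, Matrix.of_apply, mul_add, mul_ite,
      mul_zero, Finset.sum_add_distrib, Finset.sum_ite_eq', Finset.mem_univ, if_true,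
      Fin.sum_univ_two, hB21, hB22, hQ21, hQ22, hadef, hbdef, hw1, hw2, hw3, hw4, hw5 k, hw5 l]
    norm_num
  -- determinant identities
  have hMdet : M.det = P.det * (B21 * X + B22).det := by
    rw [← Matrix.det_submatrix_equiv_self e M, Msub,
      det_fromBlocks_schur P B12 B21 B22 X hPX]
  have hQdet : Q.det = -(c * c) * (B21 * X + B22).det := by
    rw [← Matrix.det_submatrix_equiv_self eQ Q, Qsub,
      det_fromBlocks_schur Q11 Q12 Q21 Q22 XQ hQX, hSchur]
    congr 1
    have hQ11' : Q11 = !![0, c; c, 0] := by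
      ext i j
      fin_cases i <;> fin_cases j <;>
        simp [hQ11, hw3, hw4, ← hcdef, hsym r (r - 1), Fin.ext_iff]
    rw [hQ11', Matrix.det_fin_two_of]
    ring
  rw [hMdet, hQdet]
  field_simp
end

section
/- Let K be a field and f : diag(P_n) → K a frieze on the n-gon (n ≥ 3), i.e., a symmetric map on pairs of distinct vertices satisfying the Ptolemy relation f(i,k)f(j,ℓ) = f(i,j)f(k,ℓ) + f(i,ℓ)f(j,k) for all 1 ≤ i < j < k < ℓ ≤ n. Let M_f be the n×n symmetric matrix with zero diagonal and entries f(i,j). Then det(M_f) = -(-2)^{n-2} · f(1,2)·f(2,3)·…·f(n-1,n)·f(n,1). -/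
open Matrix Finset

section FriezeAux

variable {L : Type*} [Field L]

/-- The superdiagonal shift matrix. -/
def shiftS (n : ℕ) (L : Type*) [Field L] : Matrix (Fin n) (Fin n) L :=
  Matrix.of fun i j => if (j : ℕ) = (i : ℕ) + 1 then 1 else 0

lemma shiftS_mul_apply {n : ℕ} (X : Matrix (Fin n) (Fin n) L) (i j : Fin n) :
    (shiftS n L * X) i j = if h : (i : ℕ) + 1 < n then X ⟨(i : ℕ) + 1, h⟩ j else 0 := by
  rw [Matrix.mul_apply]
  by_cases h : (i : ℕ) + 1 < n
  · rw [dif_pos h, Finset.sum_eq_single (⟨(i : ℕ) + 1, h⟩ : Fin n)]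
    · simp [shiftS]
    · intro b _ hb
      simp only [shiftS, of_apply]
      rw [if_neg, zero_mul]
      intro hc; exact hb (Fin.ext hc)
    · simp
  · rw [dif_neg h]
    apply Finset.sum_eq_zero
    intro b _
    simp only [shiftS, of_apply]
    rw [if_neg, zero_mul]
    intro hc; exact h (hc ▸ b.isLt)

lemma mul_shiftST_apply {n : ℕ} (X : Matrix (Fin n) (Fin n) L) (i j : Fin n) :
    (X * (shiftS n L)ᵀ) i j = if h : (j : ℕ) + 1 < n then X i ⟨(j : ℕ) + 1, h⟩ else 0 := by
  rw [Matrix.mul_apply]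
  by_cases h : (j : ℕ) + 1 < n
  · rw [dif_pos h, Finset.sum_eq_single (⟨(j : ℕ) + 1, h⟩ : Fin n)]
    · simp [shiftS]
    · intro b _ hb
      simp only [shiftS, transpose_apply, of_apply]
      rw [if_neg, mul_zero]
      intro hc; exact hb (Fin.ext hc)
    · simp
  · rw [dif_neg h]
    apply Finset.sum_eq_zero
    intro b _
    simp only [shiftS, transpose_apply, of_apply]
    rw [if_neg, mul_zero]
    intro hc; exact h (hc ▸ b.isLt)

lemma det_one_sub_shiftS (n : ℕ) : ((1 : Matrix (Fin n) (Fin n) L) - shiftS n L).det = 1 := by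
  have h : ((1 : Matrix (Fin n) (Fin n) L) - shiftS n L).BlockTriangular id := by
    intro i j hij
    simp only [id] at hij
    simp only [Matrix.sub_apply, shiftS, of_apply, one_apply]
    rw [if_neg (by omega : ¬ (j : ℕ) = (i : ℕ) + 1), if_neg (Fin.ne_of_gt hij)]
    ring
  rw [Matrix.det_of_upperTriangular h]
  apply Finset.prod_eq_one
  intro i _
  simp [shiftS, one_apply]

lemma sum_ite_val_eq {n : ℕ} (c : ℕ) (hc : c < n) (g : Fin n → L) :
    (∑ k : Fin n, if (k : ℕ) = c then g k else 0) = g ⟨c, hc⟩ := by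
  rw [Finset.sum_eq_single (⟨c, hc⟩ : Fin n)]
  · rw [if_pos rfl]
  · intro b _ hb
    rw [if_neg (fun hc' => hb (Fin.ext hc'))]
  · intro h; exact absurd (Finset.mem_univ _) h

lemma det_matC {n : ℕ} (hn : 3 ≤ n) (h2 : (2 : L) ≠ 0) (w : ℕ → L) :
    (Matrix.of fun i j : Fin n => if (i : ℕ) < n - 1 then (if (j : ℕ) ≤ (i : ℕ) then (-1 : L) else 1)
      else w (n - 1) - w (j : ℕ)).det = (-1) ^ (n - 1) * 2 ^ (n - 2) * (w (n - 1) - w 0) := by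
  set C : Matrix (Fin n) (Fin n) L := Matrix.of fun i j : Fin n =>
    if (i : ℕ) < n - 1 then (if (j : ℕ) ≤ (i : ℕ) then (-1 : L) else 1)
      else w (n - 1) - w (j : ℕ) with hC
  set U : Matrix (Fin n) (Fin 2) L := Matrix.of fun i a =>
    ![(if (i : ℕ) < n - 1 then (1 : L) else 2), (if (i : ℕ) = n - 1 then 1 else 0)] a with hU
  set V : Matrix (Fin 2) (Fin n) L := Matrix.of fun a j =>
    ![(if (j : ℕ) = n - 1 then (1 : L) else 0),
      (if (j : ℕ) < n - 1 then w ((j : ℕ) + 1) - w (j : ℕ) else 0)] a with hV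
  have hone : ∀ a b : Fin n, (1 : Matrix (Fin n) (Fin n) L) a b = if (a : ℕ) = (b : ℕ) then 1 else 0 := by
    intro a b; rw [Matrix.one_apply]; simp [Fin.ext_iff]
  have hCF : C * ((1 : Matrix (Fin n) (Fin n) L) - (shiftS n L)ᵀ) = (-2 : L) • 1 + U * V := by
    ext i j
    rw [Matrix.mul_sub, Matrix.mul_one, Matrix.sub_apply, mul_shiftST_apply,
      Matrix.add_apply, Matrix.smul_apply, hone, smul_eq_mul, Matrix.mul_apply, Fin.sum_univ_two]
    simp only [hC, hU, hV, of_apply, Matrix.cons_val_zero, Matrix.cons_val_one, Matrix.head_cons]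
    by_cases hj : (j : ℕ) + 1 < n
    · rw [dif_pos hj]
      split_ifs <;> first | omega | ring
    · rw [dif_neg hj]
      have hj' : (j : ℕ) = n - 1 := by omega
      rw [hj']
      split_ifs <;> first | omega | ring
  have hdetE : ((1 : Matrix (Fin n) (Fin n) L) - (shiftS n L)ᵀ).det = 1 := by
    have h : ((1 : Matrix (Fin n) (Fin n) L) - (shiftS n L)ᵀ)
        = ((1 : Matrix (Fin n) (Fin n) L) - shiftS n L)ᵀ := by
      rw [Matrix.transpose_sub, Matrix.transpose_one]
    rw [h, Matrix.det_transpose, det_one_sub_shiftS]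
  have hdC : C.det = ((-2 : L) • 1 + U * V).det := by
    rw [← hCF, Matrix.det_mul, hdetE, mul_one]
  -- entries of V * U
  have hVU00 : (V * U) 0 0 = 2 := by
    rw [Matrix.mul_apply]
    have h1 : ∀ k : Fin n, V 0 k * U k 0 = if (k : ℕ) = n - 1 then (2 : L) else 0 := by
      intro k
      simp only [hU, hV, of_apply, Matrix.cons_val_zero]
      split_ifs <;> first | omega | ring
    rw [Finset.sum_congr rfl fun k _ => h1 k, sum_ite_val_eq (n - 1) (by omega)]
  have hVU01 : (V * U) 0 1 = 1 := by
    rw [Matrix.mul_apply]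
    have h1 : ∀ k : Fin n, V 0 k * U k 1 = if (k : ℕ) = n - 1 then (1 : L) else 0 := by
      intro k
      simp only [hU, hV, of_apply, Matrix.cons_val_zero, Matrix.cons_val_one, Matrix.head_cons]
      split_ifs <;> first | omega | ring
    rw [Finset.sum_congr rfl fun k _ => h1 k, sum_ite_val_eq (n - 1) (by omega)]
  have hVU11 : (V * U) 1 1 = 0 := by
    rw [Matrix.mul_apply]
    apply Finset.sum_eq_zero
    intro k _
    simp only [hU, hV, of_apply, Matrix.cons_val_zero, Matrix.cons_val_one, Matrix.head_cons]
    split_ifs <;> first | omega | ring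
  have hVU10 : (V * U) 1 0 = w (n - 1) - w 0 := by
    rw [Matrix.mul_apply]
    have h1 : ∀ k : Fin n, V 1 k * U k 0
        = if (k : ℕ) < n - 1 then w ((k : ℕ) + 1) - w (k : ℕ) else 0 := by
      intro k
      simp only [hU, hV, of_apply, Matrix.cons_val_zero, Matrix.cons_val_one, Matrix.head_cons]
      split_ifs <;> first | omega | ring
    rw [Finset.sum_congr rfl fun k _ => h1 k]
    rw [Fin.sum_univ_eq_sum_range (fun k => if k < n - 1 then w (k + 1) - w k else 0) n]
    obtain ⟨m, rfl⟩ : ∃ m, n = m + 1 := ⟨n - 1, by omega⟩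
    rw [Finset.sum_range_succ, if_neg (by omega), add_zero,
      Finset.sum_congr rfl (fun k hk => if_pos (by simpa using hk))]
    simpa using Finset.sum_range_sub w m
  have key : ((-2 : L) • 1 + U * V).det
      = (-2 : L) ^ n * ((1 : Matrix (Fin 2) (Fin 2) L) + (-2 : L)⁻¹ • (V * U)).det := by
    have h1 : ((-2 : L) • 1 + U * V)
        = (-2 : L) • ((1 : Matrix (Fin n) (Fin n) L) + U * ((-2 : L)⁻¹ • V)) := by
      rw [Matrix.mul_smul, smul_add, smul_smul,
        mul_inv_cancel₀ (by simpa using neg_ne_zero.mpr h2), one_smul]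
    rw [h1, Matrix.det_smul, Fintype.card_fin, Matrix.det_one_add_mul_comm, Matrix.smul_mul]
  rw [hdC, key, Matrix.det_fin_two]
  simp only [Matrix.add_apply, Matrix.smul_apply, smul_eq_mul, hVU00, hVU01, hVU10, hVU11,
    Matrix.one_apply_eq, Matrix.one_apply_ne (by decide : (0 : Fin 2) ≠ 1),
    Matrix.one_apply_ne (by decide : (1 : Fin 2) ≠ 0)]
  obtain ⟨m, rfl⟩ : ∃ m, n = m + 3 := ⟨n - 3, by omega⟩
  have e1 : m + 3 - 1 = m + 2 := by omega
  have e2 : m + 3 - 2 = m + 1 := by omega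
  rw [e1, e2]
  have hp : (-2 : L) ^ (m + 3) = (-1) ^ m * 2 ^ m * (-8) := by
    rw [pow_add, neg_pow (2 : L) m]; ring
  have hq : (-1 : L) ^ (m + 2) = (-1) ^ m := by rw [pow_add]; ring
  rw [hp, hq, pow_add]
  field_simp
  ring

lemma det_matB {n : ℕ} (hn : 3 ≤ n) (h2 : (2 : L) ≠ 0) (w : ℕ → L) :
    (Matrix.of fun i j : Fin n => if (i : ℕ) ≤ (j : ℕ) then w (j : ℕ) - w (i : ℕ)
      else w (i : ℕ) - w (j : ℕ)).det
      = (-1) ^ (n - 1) * 2 ^ (n - 2) * (w (n - 1) - w 0)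
        * ∏ i ∈ Finset.range (n - 1), (w (i + 1) - w i) := by
  set B : Matrix (Fin n) (Fin n) L := Matrix.of fun i j : Fin n =>
    if (i : ℕ) ≤ (j : ℕ) then w (j : ℕ) - w (i : ℕ) else w (i : ℕ) - w (j : ℕ) with hB
  set C : Matrix (Fin n) (Fin n) L := Matrix.of fun i j : Fin n =>
    if (i : ℕ) < n - 1 then (if (j : ℕ) ≤ (i : ℕ) then (-1 : L) else 1)
      else w (n - 1) - w (j : ℕ) with hC
  set D : Matrix (Fin n) (Fin n) L :=
    Matrix.diagonal (fun i : Fin n => if (i : ℕ) < n - 1 then w ((i : ℕ) + 1) - w (i : ℕ) else 1)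
    with hD
  have hEB : ((1 : Matrix (Fin n) (Fin n) L) - shiftS n L) * B = D * C := by
    ext i j
    rw [Matrix.sub_mul, Matrix.one_mul, Matrix.sub_apply, shiftS_mul_apply, Matrix.diagonal_mul]
    simp only [hB, hC, of_apply]
    by_cases hi : (i : ℕ) + 1 < n
    · rw [dif_pos hi]
      by_cases hij : (j : ℕ) = (i : ℕ)
      · rw [hij]
        split_ifs <;> first | omega | ring
      · split_ifs <;> first | omega | ring
    · rw [dif_neg hi]
      have hi' : (i : ℕ) = n - 1 := by omega
      rw [hi']
      by_cases hj2 : (j : ℕ) = n - 1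
      · rw [hj2]
        split_ifs <;> first | omega | ring
      · split_ifs <;> first | omega | ring
  have hBdet : B.det = D.det * C.det := by
    have h1 : (((1 : Matrix (Fin n) (Fin n) L) - shiftS n L) * B).det = B.det := by
      rw [Matrix.det_mul, det_one_sub_shiftS, one_mul]
    rw [← h1, hEB, Matrix.det_mul]
  have hDdet : D.det = ∏ i ∈ Finset.range (n - 1), (w (i + 1) - w i) := by
    rw [hD, Matrix.det_diagonal,
      Fin.prod_univ_eq_prod_range (fun i => if i < n - 1 then w (i + 1) - w i else 1) n]
    obtain ⟨m, hm⟩ : ∃ m, n = m + 1 := ⟨n - 1, by omega⟩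
    subst hm
    rw [Finset.prod_range_succ, if_neg (by omega), mul_one]
    exact Finset.prod_congr rfl fun k hk => if_pos (by simpa using hk)
  rw [hBdet, hDdet, det_matC hn h2 w]
  ring

def friezeMat {R : Type*} [CommRing R] (n : ℕ) (u v : ℕ → R) : Matrix (Fin n) (Fin n) R :=
  Matrix.of fun i j : Fin n => if (i : ℕ) ≤ (j : ℕ)
    then u (i : ℕ) * v (j : ℕ) - u (j : ℕ) * v (i : ℕ)
    else u (j : ℕ) * v (i : ℕ) - u (i : ℕ) * v (j : ℕ)

def friezeRHS {R : Type*} [CommRing R] (n : ℕ) (u v : ℕ → R) : R :=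
  -(-2 : R) ^ (n - 2) * (∏ i ∈ Finset.range (n - 1), (u i * v (i + 1) - u (i + 1) * v i))
    * (u 0 * v (n - 1) - u (n - 1) * v 0)


lemma det_friezeMat_field {n : ℕ} (hn : 3 ≤ n) (h2 : (2 : L) ≠ 0) (u v : ℕ → L)
    (hu : ∀ i, u i ≠ 0) : (friezeMat n u v).det = friezeRHS n u v := by
  set w : ℕ → L := fun i => v i / u i with hw
  have hM : friezeMat n u v = Matrix.diagonal (fun i : Fin n => u (i : ℕ))
      * (Matrix.of fun i j : Fin n => if (i : ℕ) ≤ (j : ℕ) then w (j : ℕ) - w (i : ℕ)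
          else w (i : ℕ) - w (j : ℕ))
      * Matrix.diagonal (fun i : Fin n => u (i : ℕ)) := by
    ext i j
    rw [Matrix.mul_diagonal, Matrix.diagonal_mul]
    simp only [friezeMat, of_apply, hw]
    have h1 := hu (i : ℕ)
    have h2 := hu (j : ℕ)
    split_ifs <;> field_simp <;> ring
  rw [hM, Matrix.det_mul, Matrix.det_mul, Matrix.det_diagonal, det_matB hn h2 w]
  have hfac : ∀ i : ℕ, u i * v (i + 1) - u (i + 1) * v i = u i * u (i + 1) * (w (i + 1) - w i) := by
    intro i
    have h1 := hu i
    have h2 := hu (i + 1)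
    rw [hw]; field_simp
  have hfac2 : u 0 * v (n - 1) - u (n - 1) * v 0 = u 0 * u (n - 1) * (w (n - 1) - w 0) := by
    have h1 := hu 0
    have h2 := hu (n - 1)
    rw [hw]; field_simp
  have hsign : (-1 : L) ^ (n - 1) * 2 ^ (n - 2) = -(-2 : L) ^ (n - 2) := by
    have h : n - 1 = (n - 2) + 1 := by omega
    rw [h, pow_succ, neg_pow (2 : L)]; ring
  have hprod : (∏ i ∈ Finset.range (n - 1), (u i * v (i + 1) - u (i + 1) * v i))
      = (∏ i ∈ Finset.range (n - 1), u i) * (∏ i ∈ Finset.range (n - 1), u (i + 1))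
        * ∏ i ∈ Finset.range (n - 1), (w (i + 1) - w i) := by
    rw [Finset.prod_congr rfl fun i _ => hfac i, Finset.prod_mul_distrib, Finset.prod_mul_distrib]
  have hP : (∏ i : Fin n, u (i : ℕ)) = (∏ i ∈ Finset.range (n - 1), u i) * u (n - 1) := by
    rw [Fin.prod_univ_eq_prod_range]
    obtain ⟨m, rfl⟩ : ∃ m, n = m + 1 := ⟨n - 1, by omega⟩
    rw [Finset.prod_range_succ, Nat.add_sub_cancel]
  have hP' : (∏ i : Fin n, u (i : ℕ)) = u 0 * ∏ i ∈ Finset.range (n - 1), u (i + 1) := by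
    rw [Fin.prod_univ_eq_prod_range]
    obtain ⟨m, rfl⟩ : ∃ m, n = m + 1 := ⟨n - 1, by omega⟩
    rw [Finset.prod_range_succ', Nat.add_sub_cancel, mul_comm]
  rw [friezeRHS, hprod, hfac2, ← hsign]
  nth_rewrite 1 [hP]
  nth_rewrite 1 [hP']
  ring

lemma map_friezeMat {A B : Type*} [CommRing A] [CommRing B] (φ : A →+* B) (n : ℕ) (u v : ℕ → A) :
    φ.mapMatrix (friezeMat n u v) = friezeMat n (φ ∘ u) (φ ∘ v) := by
  ext i j
  simp only [RingHom.mapMatrix_apply, Matrix.map_apply, friezeMat, of_apply, Function.comp_apply]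
  split_ifs <;> simp [map_sub, _root_.map_mul]

lemma map_friezeRHS {A B : Type*} [CommRing A] [CommRing B] (φ : A →+* B) (n : ℕ) (u v : ℕ → A) :
    φ (friezeRHS n u v) = friezeRHS n (φ ∘ u) (φ ∘ v) := by
  simp only [friezeRHS, _root_.map_mul, map_neg, map_pow, map_sub, map_prod, map_ofNat,
    Function.comp_apply]

lemma det_friezeMat {R : Type*} [CommRing R] {n : ℕ} (hn : 3 ≤ n) (u v : ℕ → R) :
    (friezeMat n u v).det = friezeRHS n u v := by
  classical
  set P := MvPolynomial (ℕ ⊕ ℕ) ℤ with hPdef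
  let Lf := FractionRing P
  set U : ℕ → P := fun i => MvPolynomial.X (Sum.inl i) with hUdef
  set V : ℕ → P := fun i => MvPolynomial.X (Sum.inr i) with hVdef
  have hinj : Function.Injective (algebraMap P Lf) := IsFractionRing.injective P Lf
  have h2P : (2 : P) ≠ 0 := two_ne_zero
  have hgen : (friezeMat n U V).det = friezeRHS n U V := by
    apply hinj
    rw [RingHom.map_det, map_friezeMat, map_friezeRHS]
    apply det_friezeMat_field hn
    · intro h
      apply h2P
      apply hinj
      rw [map_ofNat, map_zero]
      exact h
    · intro i
      simp only [Function.comp_apply, hUdef]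
      intro h
      exact MvPolynomial.X_ne_zero _ (hinj (by rw [h, map_zero]))
  set φ : P →+* R := MvPolynomial.eval₂Hom (Int.castRingHom R) (Sum.elim u v) with hφdef
  have hU : (φ ∘ U) = u := funext fun i => by
    rw [hφdef, hUdef]; exact MvPolynomial.eval₂Hom_X' _ _ _
  have hV : (φ ∘ V) = v := funext fun i => by
    rw [hφdef, hVdef]; exact MvPolynomial.eval₂Hom_X' _ _ _
  have h := congrArg φ hgen
  rw [RingHom.map_det, map_friezeMat, map_friezeRHS, hU, hV] at h
  exact h

/-- signed version of the (0-indexed) frieze. -/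
def sgf {K : Type*} [Field K] (f : ℕ → ℕ → K) (i j : ℕ) : K :=
  if i < j then f (i + 1) (j + 1) else if j < i then -(f (j + 1) (i + 1)) else 0

lemma sgf_lt {K : Type*} [Field K] (f : ℕ → ℕ → K) {i j : ℕ} (h : i < j) :
    sgf f i j = f (i + 1) (j + 1) := if_pos h

lemma sgf_gt {K : Type*} [Field K] (f : ℕ → ℕ → K) {i j : ℕ} (h : j < i) :
    sgf f i j = -(f (j + 1) (i + 1)) := by
  rw [sgf, if_neg (by omega), if_pos h]

lemma sgf_self {K : Type*} [Field K] (f : ℕ → ℕ → K) (i : ℕ) :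
    sgf f i i = 0 := by
  rw [sgf, if_neg (by omega), if_neg (by omega)]

lemma frieze_pfaffian {K : Type*} [Field K] (n : ℕ) (f : ℕ → ℕ → K)
    (hP : ∀ i j k l, 1 ≤ i → i < j → j < k → k < l → l ≤ n →
      f i k * f j l = f i j * f k l + f i l * f j k)
    {a b : ℕ} (hab : a < b) (hbn : b < n) :
    ∀ i j : ℕ, i < j → j < n →
      f (a + 1) (b + 1) * f (i + 1) (j + 1) = sgf f a i * sgf f b j - sgf f a j * sgf f b i := by
  have hp0 : ∀ i j k l : ℕ, i < j → j < k → k < l → l < n →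
      f (i + 1) (k + 1) * f (j + 1) (l + 1)
        = f (i + 1) (j + 1) * f (k + 1) (l + 1) + f (i + 1) (l + 1) * f (j + 1) (k + 1) :=
    fun i j k l h1 h2 h3 h4 =>
      hP (i + 1) (j + 1) (k + 1) (l + 1) (by omega) (by omega) (by omega) (by omega) (by omega)
  intro i j hij hjn
  rcases lt_trichotomy i a with hia | rfl | hia
  · rcases lt_trichotomy j a with hja | rfl | hja
    · -- i < j < a < b
      rw [sgf_gt f hia, sgf_gt f hja, sgf_gt f (show j < b by omega), sgf_gt f (show i < b by omega)]
      linear_combination -(hp0 i j a b hij hja hab hbn)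
    · -- i < j = a < b
      rw [sgf_gt f hia, sgf_self, sgf_gt f hab, sgf_gt f (show i < b by omega)]
      ring
    · rcases lt_trichotomy j b with hjb | rfl | hjb
      · -- i < a < j < b
        rw [sgf_gt f hia, sgf_lt f hja, sgf_gt f hjb, sgf_gt f (show i < b by omega)]
        linear_combination hp0 i a j b hia hja hjb hbn
      · -- i < a < j = b
        rw [sgf_gt f hia, sgf_self, sgf_lt f hja, sgf_gt f (show i < j by omega)]
        ring
      · -- i < a < b < j
        rw [sgf_gt f hia, sgf_lt f hjb, sgf_lt f hja, sgf_gt f (show i < b by omega)]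
        linear_combination -(hp0 i a b j hia hab hjb hjn)
  · -- i = a
    rcases lt_trichotomy j b with hjb | rfl | hjb
    · rw [sgf_self, sgf_lt f hij, sgf_gt f hab]
      ring
    · rw [sgf_self, sgf_lt f hij, sgf_gt f hab]
      ring
    · rw [sgf_self, sgf_lt f hij, sgf_gt f hab]
      ring
  · rcases lt_trichotomy i b with hib | rfl | hib
    · rcases lt_trichotomy j b with hjb | rfl | hjb
      · -- a < i < j < b
        rw [sgf_lt f hia, sgf_gt f hjb, sgf_lt f (show a < j by omega), sgf_gt f hib]
        linear_combination -(hp0 a i j b hia hij hjb hbn)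
      · -- a < i < j = b
        rw [sgf_lt f hia, sgf_self, sgf_lt f (show a < j by omega), sgf_gt f hib]
        ring
      · -- a < i < b < j
        rw [sgf_lt f hia, sgf_lt f hjb, sgf_lt f (show a < j by omega), sgf_gt f hib]
        linear_combination hp0 a i b j hia hib hjb hjn
    · -- a < b = i < j
      rw [sgf_lt f hab, sgf_lt f hij, sgf_lt f (show a < j by omega), sgf_self]
      ring
    · -- a < b < i < j
      rw [sgf_lt f (show a < i by omega), sgf_lt f (show b < j by omega),
        sgf_lt f (show a < j by omega), sgf_lt f hib]
      linear_combination -(hp0 a b i j hab hib hij hjn)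

end FriezeAux

/-- (Baur–Marsh) For a frieze `f` on the `n`-gon (all Ptolemy relations hold),
`det M_f = -(-2)^(n-2) f(1,2) f(2,3) ⋯ f(n-1,n) f(n,1)`. -/
theorem det_frieze_matrix_baur_marsh {K : Type*} [Field K] (n : ℕ) (hn : 3 ≤ n)
    (f : ℕ → ℕ → K)
    (hsym : ∀ i j, f i j = f j i)
    (hPtolemy : ∀ i j k l, 1 ≤ i → i < j → j < k → k < l → l ≤ n →
      f i k * f j l = f i j * f k l + f i l * f j k) :
    (Matrix.of fun i j : Fin n => if i = j then (0 : K) else f (i.val + 1) (j.val + 1)).det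
      = -(-2 : K) ^ (n - 2) * (∏ i ∈ Finset.Icc 1 (n - 1), f i (i + 1)) * f n 1 := by
  have hprodIcc : (∏ i ∈ Finset.Icc 1 (n - 1), f i (i + 1))
      = ∏ i ∈ Finset.range (n - 1), f (i + 1) (i + 2) := by
    rw [← Finset.Ico_add_one_right_eq_Icc, Finset.prod_Ico_eq_prod_range]
    simp only [Nat.add_sub_cancel]
    exact Finset.prod_congr rfl fun i _ => by congr 1 <;> omega
  have hn1 : n - 1 + 1 = n := by omega
  by_cases hzero : ∀ i j : ℕ, i < j → j < n → f (i + 1) (j + 1) = 0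
  · -- degenerate case: everything vanishes
    have hM : (Matrix.of fun i j : Fin n => if i = j then (0 : K) else f (i.val + 1) (j.val + 1))
        = 0 := by
      ext i j
      simp only [of_apply, Matrix.zero_apply]
      rcases lt_trichotomy (i : ℕ) (j : ℕ) with h | h | h
      · rw [if_neg (fun he => by rw [he] at h; omega), hzero _ _ h j.isLt]
      · rw [if_pos (Fin.ext h)]
      · rw [if_neg (fun he => by rw [he] at h; omega), hsym, hzero _ _ h i.isLt]
    rw [hM, (by haveI : Nonempty (Fin n) := ⟨⟨0, by omega⟩⟩; exact Matrix.det_zero : (0 : Matrix (Fin n) (Fin n) K).det = 0)]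
    have : f n 1 = 0 := by
      rw [hsym]
      have := hzero 0 (n - 1) (by omega) (by omega)
      rwa [hn1] at this
    rw [this, mul_zero]
  · push_neg at hzero
    obtain ⟨a, b, hab, hbn, hfab⟩ := hzero
    set c : K := f (a + 1) (b + 1) with hc
    have key := frieze_pfaffian n f hPtolemy hab hbn
    set u : ℕ → K := fun i => sgf f a i with hu
    set v : ℕ → K := fun i => sgf f b i / c with hv
    have hentry : ∀ i j : ℕ, i < j → j < n → f (i + 1) (j + 1) = u i * v j - u j * v i := by
      intro i j hij hjn
      rw [hu, hv]
      field_simp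
      linear_combination key i j hij hjn
    have hM : (Matrix.of fun i j : Fin n => if i = j then (0 : K) else f (i.val + 1) (j.val + 1))
        = friezeMat n u v := by
      ext i j
      simp only [of_apply, friezeMat]
      rcases lt_trichotomy (i : ℕ) (j : ℕ) with h | h | h
      · rw [if_neg (fun he => by rw [he] at h; omega), if_pos (le_of_lt h),
          hentry _ _ h j.isLt]
      · rw [if_pos (Fin.ext h), if_pos (le_of_eq h), h]
        ring
      · rw [if_neg (fun he => by rw [he] at h; omega), if_neg (by omega), hsym,
          hentry _ _ h i.isLt]
    rw [hM, det_friezeMat hn u v, friezeRHS, hprodIcc]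
    have hedge : ∀ i : ℕ, i + 1 < n → u i * v (i + 1) - u (i + 1) * v i = f (i + 1) (i + 2) :=
      fun i hi => (hentry i (i + 1) (by omega) hi).symm
    have hlast : u 0 * v (n - 1) - u (n - 1) * v 0 = f n 1 := by
      rw [← hentry 0 (n - 1) (by omega) (by omega), hn1, hsym]
    rw [hlast, Finset.prod_congr rfl fun i hi => hedge i (by simp at hi; omega)]
end

section
/- Let f : diag(P_n) → ℤ be a frieze on the n-gon with f(i,i+1) = 1 for all consecutive vertices (indices mod n), satisfying all Ptolemy relations. Then for the n×n symmetric matrix M_f with zero diagonal and entries f(i,j), one has det(M_f) = -(-2)^{n-2}. -/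
/-- (Broline–Crowe–Isaacs) For a classic frieze `f` on the `n`-gon, i.e. one with
`f(i,i+1) = 1` on all edges (including `f(n,1) = 1`) and satisfying all Ptolemy
relations, `det M_f = -(-2)^(n-2)`. -/
theorem det_frieze_matrix_BCI (n : ℕ) (hn : 3 ≤ n)
    (f : ℕ → ℕ → ℤ)
    (hsym : ∀ i j, f i j = f j i)
    (hedge : ∀ i, 1 ≤ i → i ≤ n - 1 → f i (i + 1) = 1)
    (hedge' : f n 1 = 1)
    (hPtolemy : ∀ i j k l, 1 ≤ i → i < j → j < k → k < l → l ≤ n →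
      f i k * f j l = f i j * f k l + f i l * f j k) :
    (Matrix.of fun i j : Fin n => if i = j then (0 : ℤ) else f (i.val + 1) (j.val + 1)).det
      = -(-2 : ℤ) ^ (n - 2) := by
  obtain ⟨m, rfl⟩ : ∃ m, n = m + 3 := ⟨n - 3, by omega⟩
  set M : Matrix (Fin (m+3)) (Fin (m+3)) ℤ :=
    Matrix.of fun i j : Fin (m+3) => if i = j then (0 : ℤ) else f (i.val + 1) (j.val + 1)
    with hM
  -- the three-term recurrence coming from Ptolemy relations
  have hrec : ∀ j w, 2 ≤ j → j + 1 ≤ m + 3 → 1 ≤ w → w ≤ m + 3 →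
      w ≠ j - 1 → w ≠ j → w ≠ j + 1 →
      f (j+1) w - f (j-1) (j+1) * f j w + f (j-1) w = 0 := by
    intro j w hj2 hjn hw1 hwn hw_1 hw0 hwp1
    have e1 : f (j-1) j = 1 := by
      have := hedge (j-1) (by omega) (by omega)
      rwa [show j - 1 + 1 = j by omega] at this
    have e2 : f j (j+1) = 1 := hedge j (by omega) (by omega)
    rcases lt_or_gt_of_ne hw0 with hlt | hgt
    · have hwlt : w < j - 1 := by omega
      have hP := hPtolemy w (j-1) j (j+1) (by omega) (by omega) (by omega) (by omega) (by omega)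
      rw [e1, e2] at hP
      rw [hsym (j+1) w, hsym j w, hsym (j-1) w]
      linear_combination -hP
    · have hP := hPtolemy (j-1) j (j+1) w (by omega) (by omega) (by omega) (by omega) (by omega)
      rw [e1, e2] at hP
      linear_combination -hP
  -- row operation matrix
  set a : Fin (m+3) → ℤ := fun i => f (i.val - 1) (i.val + 1) with ha
  set A : Matrix (Fin (m+3)) (Fin (m+3)) ℤ := Matrix.of fun i k =>
    if k = i then 1 else if 2 ≤ i.val ∧ k.val + 1 = i.val then -(a i)
    else if 2 ≤ i.val ∧ k.val + 2 = i.val then 1 else 0 with hA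
  have hdetA : A.det = 1 := by
    have htri : A.BlockTriangular OrderDual.toDual := by
      intro i k hik
      have hik' : i.val < k.val := hik
      simp only [hA, Matrix.of_apply]
      rw [if_neg (by intro hcon; rw [Fin.ext_iff] at hcon; omega),
        if_neg (by rintro ⟨-, h⟩; omega), if_neg (by rintro ⟨-, h⟩; omega)]
    rw [Matrix.det_of_lowerTriangular A htri]
    have hdg : ∀ i : Fin (m+3), A i i = 1 := by intro i; simp [hA]
    simp [hdg]
  set N : Matrix (Fin (m+3)) (Fin (m+3)) ℤ := A * M with hNdef
  have hN : ∀ i l : Fin (m+3), N i l =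
      if i.val < 2 then M i l else if l.val + 1 = i.val then 2 else 0 := by
    intro i l
    by_cases hi : i.val < 2
    · rw [if_pos hi, hNdef, Matrix.mul_apply, Finset.sum_eq_single i]
      · simp [hA]
      · intro k _ hk
        have hz : A i k = 0 := by
          simp only [hA, Matrix.of_apply]
          rw [if_neg hk, if_neg (by rintro ⟨h, -⟩; omega), if_neg (by rintro ⟨h, -⟩; omega)]
        rw [hz, zero_mul]
      · intro h; exact absurd (Finset.mem_univ i) h
    · push_neg at hi
      rw [if_neg (by omega)]
      have hlt_i := i.isLt
      have hlt_l := l.isLt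
      obtain ⟨i1, hv1⟩ : ∃ i1 : Fin (m+3), i1.val = i.val - 1 := ⟨⟨i.val - 1, by omega⟩, rfl⟩
      obtain ⟨i2, hv2⟩ : ∃ i2 : Fin (m+3), i2.val = i.val - 2 := ⟨⟨i.val - 2, by omega⟩, rfl⟩
      have key : ∀ k : Fin (m+3), A i k * M k l =
          (if k = i then M i l else 0) + (if k = i1 then -(a i) * M i1 l else 0)
            + (if k = i2 then M i2 l else 0) := by
        intro k
        simp only [hA, Matrix.of_apply]
        by_cases h1 : k = i
        · rw [if_pos h1, if_pos h1,
            if_neg (by intro hcon; rw [Fin.ext_iff] at hcon h1; omega),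
            if_neg (by intro hcon; rw [Fin.ext_iff] at hcon h1; omega), h1]
          ring
        · rw [if_neg h1]
          by_cases hk2 : k.val + 1 = i.val
          · have hk : k = i1 := by rw [Fin.ext_iff]; omega
            rw [if_pos ⟨hi, hk2⟩, if_neg h1, if_pos hk,
              if_neg (by intro hcon; rw [Fin.ext_iff] at hcon; omega), hk]
            ring
          · rw [if_neg (by rintro ⟨-, h⟩; exact hk2 h)]
            by_cases hk3 : k.val + 2 = i.val
            · have hk : k = i2 := by rw [Fin.ext_iff]; omega
              rw [if_pos ⟨hi, hk3⟩, if_neg h1,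
                if_neg (by intro hcon; rw [Fin.ext_iff] at hcon; omega), if_pos hk, hk]
              ring
            · rw [if_neg (by rintro ⟨-, h⟩; exact hk3 h), if_neg h1,
                if_neg (by intro hcon; rw [Fin.ext_iff] at hcon; omega),
                if_neg (by intro hcon; rw [Fin.ext_iff] at hcon; omega)]
              ring
      have hsum : N i l = M i l + (-(a i)) * M i1 l + M i2 l := by
        rw [hNdef, Matrix.mul_apply, Finset.sum_congr rfl (fun k _ => key k),
          Finset.sum_add_distrib, Finset.sum_add_distrib,
          Finset.sum_ite_eq' Finset.univ, Finset.sum_ite_eq' Finset.univ,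
          Finset.sum_ite_eq' Finset.univ]
        simp
      rw [hsum]
      simp only [hM, ha, Matrix.of_apply]
      rw [hv1, hv2, show i.val - 1 + 1 = i.val by omega, show i.val - 2 + 1 = i.val - 1 by omega]
      have e_up : f (i.val) (i.val + 1) = 1 := hedge i.val (by omega) (by omega)
      have e_dn : f (i.val - 1) (i.val) = 1 := by
        have := hedge (i.val - 1) (by omega) (by omega)
        rwa [show i.val - 1 + 1 = i.val by omega] at this
      rcases Nat.lt_trichotomy (l.val + 1) i.val with hc | hc | hc
      · rcases Nat.lt_trichotomy (l.val + 1) (i.val - 1) with hd | hd | hd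
        · -- generic case below
          rw [if_neg (show ¬ i = l by intro hcon; rw [Fin.ext_iff] at hcon; omega),
            if_neg (show ¬ i1 = l by intro hcon; rw [Fin.ext_iff] at hcon; omega),
            if_neg (show ¬ i2 = l by intro hcon; rw [Fin.ext_iff] at hcon; omega),
            if_neg (show ¬ l.val + 1 = i.val by omega)]
          have hr := hrec i.val (l.val + 1) hi (by omega) (by omega) (by omega) (by omega)
            (by omega) (by omega)
          linear_combination hr
        · -- w = j - 1
          rw [if_neg (show ¬ i = l by intro hcon; rw [Fin.ext_iff] at hcon; omega),
            if_neg (show ¬ i1 = l by intro hcon; rw [Fin.ext_iff] at hcon; omega),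
            if_pos (show i2 = l by rw [Fin.ext_iff]; omega),
            if_neg (show ¬ l.val + 1 = i.val by omega), hd,
            hsym (i.val + 1) (i.val - 1), hsym (i.val) (i.val - 1), e_dn]
          ring
        · omega
      · -- w = j
        rw [if_neg (show ¬ i = l by intro hcon; rw [Fin.ext_iff] at hcon; omega),
          if_pos (show i1 = l by rw [Fin.ext_iff]; omega),
          if_neg (show ¬ i2 = l by intro hcon; rw [Fin.ext_iff] at hcon; omega),
          if_pos hc, hc, hsym (i.val + 1) (i.val), e_up, e_dn]
        ring
      · rcases Nat.lt_trichotomy (l.val + 1) (i.val + 1) with hd | hd | hd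
        · omega
        · -- w = j + 1, l = i
          rw [if_pos (show i = l by rw [Fin.ext_iff]; omega),
            if_neg (show ¬ i1 = l by intro hcon; rw [Fin.ext_iff] at hcon; omega),
            if_neg (show ¬ i2 = l by intro hcon; rw [Fin.ext_iff] at hcon; omega),
            if_neg (show ¬ l.val + 1 = i.val by omega),
            show l.val + 1 = i.val + 1 from hd, e_up]
          ring
        · -- generic case above
          rw [if_neg (show ¬ i = l by intro hcon; rw [Fin.ext_iff] at hcon; omega),
            if_neg (show ¬ i1 = l by intro hcon; rw [Fin.ext_iff] at hcon; omega),
            if_neg (show ¬ i2 = l by intro hcon; rw [Fin.ext_iff] at hcon; omega),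
            if_neg (show ¬ l.val + 1 = i.val by omega)]
          have hr := hrec i.val (l.val + 1) hi (by omega) (by omega) (by omega) (by omega)
            (by omega) (by omega)
          linear_combination hr
  -- the special permutation
  set σ₀ : Equiv.Perm (Fin (m+3)) := (finRotate (m+3)).symm with hσ₀
  have hs1 : ∀ i : Fin (m+3), 1 ≤ i.val → (σ₀ i).val = i.val - 1 := by
    intro i h1
    have hlt := i.isLt
    have h : σ₀ i = ⟨i.val - 1, by omega⟩ := by
      rw [hσ₀, Equiv.symm_apply_eq, finRotate_succ_apply]
      apply Fin.ext
      rw [Fin.val_add, Fin.val_one]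
      simp only []
      rw [Nat.mod_eq_of_lt (by omega)]
      omega
    rw [h]
  have hs0 : (σ₀ 0).val = m + 2 := by
    have h : σ₀ 0 = Fin.last (m+2) := by
      rw [hσ₀, Equiv.symm_apply_eq, finRotate_last]
    rw [h, Fin.val_last]
  have hsign : Equiv.Perm.sign σ₀ = (-1 : ℤˣ)^(m+2) := by
    have h1 : σ₀ = (finRotate (m+3))⁻¹ := rfl
    rw [h1, Equiv.Perm.sign_inv, sign_finRotate, show m + 3 - 1 = m + 2 by omega]
  have hdet : M.det = N.det := by rw [hNdef, Matrix.det_mul, hdetA, one_mul]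
  -- values of N along σ₀
  have hg0 : N 0 (σ₀ 0) = 1 := by
    rw [hN, if_pos (by simp)]
    simp only [hM, Matrix.of_apply]
    rw [if_neg (by intro hcon; rw [Fin.ext_iff] at hcon; simp at hcon; omega)]
    rw [show ((0 : Fin (m+3)) : ℕ) + 1 = 1 by simp, show (σ₀ 0).val + 1 = m + 3 by omega, hsym]
    exact hedge'
  have hg1 : N ((0 : Fin (m+2)).succ) (σ₀ ((0 : Fin (m+2)).succ)) = 1 := by
    have hval : ((0 : Fin (m+2)).succ : Fin (m+3)).val = 1 := by simp
    have hσv : (σ₀ ((0 : Fin (m+2)).succ)).val = 0 := by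
      rw [hs1 _ (by rw [hval]), hval]
    rw [hN, if_pos (by rw [hval]; omega)]
    simp only [hM, Matrix.of_apply]
    rw [if_neg (by intro hcon; rw [Fin.ext_iff] at hcon; omega)]
    rw [hval, hσv]
    have h12 : f 1 2 = 1 := by
      have := hedge 1 (by omega) (by omega); simpa using this
    rw [show (1:ℕ) + 1 = 2 from rfl, show (0:ℕ) + 1 = 1 from rfl, hsym]
    exact h12
  have hgt : ∀ i : Fin (m+1), N (i.succ.succ) (σ₀ (i.succ.succ)) = 2 := by
    intro i
    have hval : (i.succ.succ : Fin (m+3)).val = i.val + 2 := by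
      simp only [Fin.val_succ]
    have hσv : (σ₀ (i.succ.succ)).val = i.val + 1 := by
      rw [hs1 _ (by rw [hval]; omega), hval]
      omega
    rw [hN, if_neg (by rw [hval]; omega), if_pos (by rw [hσv, hval])]
  have hprod : ∏ i : Fin (m+3), N i (σ₀ i) = 2 ^ (m+1) := by
    rw [Fin.prod_univ_succ, Fin.prod_univ_succ]
    simp only [hg0, hg1, hgt]
    rw [Finset.prod_const]
    simp
  rw [hdet, ← Matrix.det_transpose N, Matrix.det_apply']
  refine (Finset.sum_eq_single σ₀ ?_ ?_).trans ?_
  · intro σ _ hne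
    have hz : ∏ i, N.transpose (σ i) i = 0 := by
      by_contra hprod0
      have hfac : ∀ i : Fin (m+3), N i (σ i) ≠ 0 := by
        intro i
        have := (Finset.prod_ne_zero_iff.mp hprod0) i (Finset.mem_univ i)
        simpa [Matrix.transpose_apply] using this
      have hhi : ∀ i : Fin (m+3), 2 ≤ i.val → (σ i).val = i.val - 1 := by
        intro i h2i
        have hf := hfac i
        rw [hN i (σ i), if_neg (by omega)] at hf
        by_cases hcond : (σ i).val + 1 = i.val
        · omega
        · rw [if_neg hcond] at hf; exact absurd rfl hf
      have hinj : ∀ w : Fin (m+3), w.val ≤ 1 → 1 ≤ (σ w).val → (σ w).val ≤ m + 1 → False := by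
        intro w hw h1 h2
        obtain ⟨u, hu⟩ : ∃ u : Fin (m+3), u.val = (σ w).val + 1 :=
          ⟨⟨(σ w).val + 1, by omega⟩, rfl⟩
        have hs := hhi u (by omega)
        have h4 : σ u = σ w := by
          apply Fin.ext; rw [hs, hu]; omega
        have h5 := σ.injective h4
        have h6 := congrArg Fin.val h5
        rw [hu] at h6
        omega
      have h00 : (σ 0).val ≠ 0 := by
        intro hcontra
        have hf := hfac 0
        have hz0 : σ 0 = 0 := Fin.ext (by rw [hcontra]; simp)
        rw [hN, if_pos (by simp), hz0] at hf
        simp [hM] at hf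
      have hv0 : (σ 0).val = m + 2 := by
        by_contra hcon
        have := (σ 0).isLt
        exact hinj 0 (by simp) (by omega) (by omega)
      have hv1' : (σ 1).val = 0 := by
        by_contra hcon
        have hne01 : (σ 1).val ≠ (σ 0).val := by
          intro h
          have := σ.injective (Fin.ext h)
          have := congrArg Fin.val this
          rw [Fin.val_one] at this
          simp at this
        have := (σ 1).isLt
        exact hinj 1 (by rw [Fin.val_one]) (by omega) (by omega)
      apply absurd _ hne
      apply Equiv.ext
      intro i
      rcases Nat.lt_or_ge i.val 2 with h | h
      · rcases Nat.lt_or_ge i.val 1 with h0 | h0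
        · have hi0 : i = 0 := Fin.ext (by rw [Fin.val_zero]; omega)
          subst hi0
          apply Fin.ext; rw [hv0, hs0]
        · have hi1 : i = 1 := Fin.ext (by rw [Fin.val_one]; omega)
          subst hi1
          apply Fin.ext
          rw [hv1', hs1 1 (by rw [Fin.val_one]), Fin.val_one]
      · apply Fin.ext
        rw [hhi i h, hs1 i (by omega)]
    rw [hz, mul_zero]
  · intro h; exact absurd (Finset.mem_univ σ₀) h
  · simp only [Matrix.transpose_apply]
    rw [hprod, hsign]
    rw [show m + 3 - 2 = m + 1 by omega]
    simp only [Units.val_pow_eq_pow_val, Units.val_neg, Units.val_one]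
    push_cast
    rw [show (-2 : ℤ) = (-1) * 2 by norm_num, mul_pow, pow_succ]
    ring
end

section
/- Let C = (c_{i,j}) be an n×n symmetric frieze matrix over a field: c_{i,j} = 0 iff i = j, and the Ptolemy relations c_{i,k}c_{j,ℓ} = c_{i,j}c_{k,ℓ} + c_{i,ℓ}c_{j,k} hold for all 1 ≤ i ≤ j ≤ k ≤ ℓ ≤ n. Then det(C) = -(-2)^{n-2} · c_{1,n} · ∏_{i=1}^{n-1} c_{i,i+1}. -/
section Maldonado
variable {K : Type*} [Field K]

lemma maldonado_prod_Icc {K : Type*} [CommMonoid K] (f : ℕ → K) (k : ℕ) :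
    ∏ i ∈ Finset.Icc 1 k, f i = ∏ i ∈ Finset.range k, f (i + 1) := by
  induction k with
  | zero => simp
  | succ k ih => rw [Finset.prod_range_succ, ← ih, Finset.prod_Icc_succ_top (by omega)]

lemma maldonado_key (n : ℕ) (c : ℕ → ℕ → K)
    (hsym : ∀ i j, c i j = c j i)
    (hzero : ∀ i j, 1 ≤ i → i ≤ n → 1 ≤ j → j ≤ n → (c i j = 0 ↔ i = j))
    (hPtolemy : ∀ i j k l, 1 ≤ i → i ≤ j → j ≤ k → k ≤ l → l ≤ n →
      c i k * c j l = c i j * c k l + c i l * c j k)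
    (a b : ℕ) (ha : 1 ≤ a) (ha2 : a + 2 ≤ n) (hb1 : 1 ≤ b) (hbn : b ≤ n) :
    c a b * c (a+1) (a+2) - c a (a+2) * c (a+1) b + c a (a+1) * c (a+2) b
      = if b = a + 1 then 2 * (c a (a+1) * c (a+1) (a+2)) else 0 := by
  by_cases hb : b = a + 1
  · subst hb
    rw [if_pos rfl]
    have h0 : c (a+1) (a+1) = 0 :=
      (hzero (a+1) (a+1) (by omega) (by omega) (by omega) (by omega)).mpr rfl
    rw [h0, hsym (a+2) (a+1)]
    ring
  · rw [if_neg hb]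
    rcases Nat.lt_or_ge b (a+1) with h | h
    · have hp := hPtolemy b a (a+1) (a+2) hb1 (by omega) (by omega) (by omega) ha2
      rw [hsym a b, hsym (a+1) b, hsym (a+2) b]
      linear_combination -hp
    · have h2 : a + 2 ≤ b := by omega
      have hp := hPtolemy a (a+1) (a+2) b ha (by omega) (by omega) h2 hbn
      linear_combination -hp

def FP (m : ℕ) (c : ℕ → ℕ → K) (i : Fin (m+2)) : K :=
  if i.val < m then -(c (i.val+1) (i.val+3)) / c (i.val+2) (i.val+3)
  else if i.val = m then -(c (m+1) 1) / c (m+2) 1 else 0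

def FQ (m : ℕ) (c : ℕ → ℕ → K) (i : Fin (m+2)) : K :=
  if i.val < m then c (i.val+1) (i.val+2) / c (i.val+2) (i.val+3) else 0

def FA (m : ℕ) (c : ℕ → ℕ → K) : Matrix (Fin (m+2)) (Fin (m+2)) K :=
  Matrix.of fun i k => (if k = i then (1:K) else 0)
    + FP m c i * (if k = i + 1 then 1 else 0)
    + FQ m c i * (if k = i + 1 + 1 then 1 else 0)

def FC (m : ℕ) (c : ℕ → ℕ → K) : Matrix (Fin (m+2)) (Fin (m+2)) K :=
  Matrix.of fun i j => c (i.val+1) (j.val+1)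

lemma fin_succ_val {m : ℕ} (i : Fin (m+2)) (h : i.val < m+1) :
    ((i+1 : Fin (m+2))).val = i.val + 1 :=
  Fin.val_add_one_of_lt (by rw [Fin.lt_def, Fin.val_last]; exact h)

lemma fin_succ_wrap {m : ℕ} (i : Fin (m+2)) (h : i.val = m+1) : (i+1 : Fin (m+2)) = 0 := by
  have : i = Fin.last (m+1) := Fin.ext (by rw [Fin.val_last]; exact h)
  rw [this, Fin.last_add_one]

lemma FAC_apply (m : ℕ) (c : ℕ → ℕ → K) (i j : Fin (m+2)) :
    (FA m c * FC m c) i j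
      = c (i.val+1) (j.val+1) + FP m c i * c ((i+1).val+1) (j.val+1)
        + FQ m c i * c ((i+1+1).val+1) (j.val+1) := by
  simp [Matrix.mul_apply, FA, FC, add_mul, ite_mul, mul_ite, Finset.sum_add_distrib,
    Finset.sum_ite_eq']

lemma FA_triangular (m : ℕ) (c : ℕ → ℕ → K) : (FA m c).BlockTriangular id := by
  intro i j h
  have hji : j.val < i.val := h
  simp only [FA, Matrix.of_apply]
  rw [if_neg (by intro he; rw [Fin.ext_iff] at he; omega : ¬ j = i)]
  by_cases hi : i.val < m + 1
  · have h1 : (i+1).val = i.val + 1 := fin_succ_val i hi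
    have hj1 : ¬ (j = i + 1) := by
      intro hj; rw [Fin.ext_iff, h1] at hj; omega
    rw [if_neg hj1]
    by_cases hi2 : i.val < m
    · have h2 : (i+1+1).val = i.val + 2 := by
        rw [fin_succ_val (i+1) (by omega), h1]
      have hj2 : ¬ (j = i + 1 + 1) := by
        intro hj; rw [Fin.ext_iff, h2] at hj; omega
      rw [if_neg hj2]; ring
    · have hq : FQ m c i = 0 := by simp [FQ, hi2]
      rw [hq]; ring
  · have hi' : i.val = m + 1 := by omega
    have hp : FP m c i = 0 := by simp [FP, hi']
    have hq : FQ m c i = 0 := by simp [FQ, hi']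
    rw [hp, hq]; ring

lemma FA_diag (m : ℕ) (c : ℕ → ℕ → K) (i : Fin (m+2)) : FA m c i i = 1 := by
  simp only [FA, Matrix.of_apply, eq_self_iff_true, if_true]
  have h1 : ¬ (i = i + 1) := by
    intro hj
    by_cases hi : i.val < m + 1
    · rw [Fin.ext_iff, fin_succ_val i hi] at hj; omega
    · have := fin_succ_wrap i (by omega)
      rw [this] at hj; rw [Fin.ext_iff] at hj; rw [Fin.val_zero] at hj; omega
  rw [if_neg h1]
  by_cases hi2 : i.val < m
  · have h2 : (i+1+1).val = i.val + 2 := by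
      rw [fin_succ_val (i+1) (by rw [fin_succ_val i (by omega)]; omega), fin_succ_val i (by omega)]
    have hj2 : ¬ (i = i + 1 + 1) := by
      intro hj; rw [Fin.ext_iff, h2] at hj; omega
    rw [if_neg hj2]; ring
  · have hq : FQ m c i = 0 := by simp [FQ, hi2]
    rw [hq]; ring

lemma FA_det (m : ℕ) (c : ℕ → ℕ → K) : (FA m c).det = 1 := by
  rw [Matrix.det_of_upperTriangular (FA_triangular m c)]
  simp [FA_diag]

end Maldonado

/-- (Maldonado, Theorem 2.5) For a symmetric frieze matrix `C` over a field (zero exactly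
on the diagonal, all Ptolemy relations), `det C = -(-2)^(n-2) c(1,n) ∏_{i=1}^{n-1} c(i,i+1)`. -/
theorem det_frieze_matrix_maldonado {K : Type*} [Field K] (n : ℕ) (hn : 2 ≤ n)
    (c : ℕ → ℕ → K)
    (hsym : ∀ i j, c i j = c j i)
    (hzero : ∀ i j, 1 ≤ i → i ≤ n → 1 ≤ j → j ≤ n → (c i j = 0 ↔ i = j))
    (hPtolemy : ∀ i j k l, 1 ≤ i → i ≤ j → j ≤ k → k ≤ l → l ≤ n →
      c i k * c j l = c i j * c k l + c i l * c j k) :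
    (Matrix.of fun i j : Fin n => c (i.val + 1) (j.val + 1)).det
      = -(-2 : K) ^ (n - 2) * c 1 n * ∏ i ∈ Finset.Icc 1 (n - 1), c i (i + 1) := by
  obtain ⟨m, rfl⟩ : ∃ m, n = m + 2 := ⟨n - 2, by omega⟩
  clear hn
  have hm2 : m + 2 - 2 = m := by omega
  have hm1 : m + 2 - 1 = m + 1 := by omega
  rw [hm2, hm1]
  -- nonvanishing of off-diagonal entries
  have hne : ∀ i j, 1 ≤ i → i ≤ m+2 → 1 ≤ j → j ≤ m+2 → i ≠ j → c i j ≠ 0 := by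
    intro i j h1 h2 h3 h4 h5 h0
    exact h5 ((hzero i j h1 h2 h3 h4).mp h0)
  -- the matrix in question is FC
  show (FC m c).det = _
  set M := FA m c * FC m c with hM
  -- entries of M
  have M_rowlt : ∀ i j : Fin (m+2), i.val < m →
      M i j = if j.val = i.val + 1 then 2 * c (i.val+1) (i.val+2) else 0 := by
    intro i j hi
    rw [hM, FAC_apply]
    have h1 : (i+1).val = i.val + 1 := fin_succ_val i (by omega)
    have h2 : (i+1+1).val = i.val + 2 := by rw [fin_succ_val (i+1) (by omega), h1]
    rw [h1, h2]
    simp only [FP, FQ, if_pos hi]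
    have hd : c (i.val+2) (i.val+3) ≠ 0 := hne _ _ (by omega) (by omega) (by omega) (by omega) (by omega)
    have hkey := maldonado_key (m+2) c hsym hzero hPtolemy (i.val+1) (j.val+1)
      (by omega) (by omega) (by omega) (by omega)
    have e1 : i.val + 1 + 1 = i.val + 2 := by omega
    have e2 : i.val + 1 + 2 = i.val + 3 := by omega
    rw [e1, e2] at hkey
    by_cases hb : j.val = i.val + 1
    · rw [if_pos hb]
      rw [if_pos (by omega)] at hkey
      field_simp
      linear_combination hkey
    · rw [if_neg hb]
      rw [if_neg (by omega)] at hkey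
      field_simp
      linear_combination hkey
  have hc1 : c (m+2) 1 ≠ 0 := hne _ _ (by omega) (by omega) (by omega) (by omega) (by omega)
  have M_rowm_diag : ∀ i : Fin (m+2), i.val = m →
      M i ⟨m+1, by omega⟩ = c (m+1) (m+2) := by
    intro i hi
    rw [hM, FAC_apply]
    have h1 : (i+1).val = i.val + 1 := fin_succ_val i (by omega)
    simp only [FP, FQ, hi, if_pos rfl, lt_irrefl, if_neg (lt_irrefl m)]
    rw [h1, hi]
    have h0 : c (m+2) (m+2) = 0 :=
      (hzero (m+2) (m+2) (by omega) (by omega) (by omega) (by omega)).mpr rfl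
    rw [h0]
    simp
  have M_rowm_zero : ∀ i : Fin (m+2), i.val = m → M i 0 = 0 := by
    intro i hi
    rw [hM, FAC_apply]
    have h1 : (i+1).val = i.val + 1 := fin_succ_val i (by omega)
    simp only [FP, FQ, hi, lt_irrefl, if_neg (lt_irrefl m), if_pos rfl]
    rw [h1, hi]
    show c (m+1) (0+1) + -c (m+1) 1 / c (m+2) 1 * c (m+2) (0+1) + 0 * _ = 0
    field_simp
    ring
  have M_rowlast : ∀ i j : Fin (m+2), i.val = m+1 → M i j = c (m+2) (j.val+1) := by
    intro i j hi
    rw [hM, FAC_apply]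
    have hp : FP m c i = 0 := by simp [FP, hi]
    have hq : FQ m c i = 0 := by simp [FQ, hi]
    rw [hp, hq, hi]
    ring
  -- the permuted matrix
  set r := finRotate (m+2) with hr
  set B := M.submatrix id r with hB
  have B_triangular : B.BlockTriangular OrderDual.toDual := by
    intro i j h
    have hijv : i.val < j.val := h
    rw [hB]
    simp only [Matrix.submatrix_apply, id]
    rcases Nat.lt_or_ge i.val m with hi | hi
    · rw [M_rowlt i (r j) hi]
      rw [if_neg ?_]
      rw [hr, coe_finRotate]
      by_cases hj : j = Fin.last (m+1)
      · rw [if_pos hj]; omega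
      · rw [if_neg hj]; have : j.val < m+1 := Fin.val_lt_last hj; omega
    · have him : i.val = m := by omega
      have hj : j = Fin.last (m+1) := by
        apply Fin.ext; rw [Fin.val_last]; omega
      have : r j = 0 := by rw [hr, hj]; simp [finRotate_succ_apply, Fin.last_add_one]
      rw [this]
      exact M_rowm_zero i him
  have B_diag : ∀ i : Fin (m+2), B i i =
      if i.val < m then 2 * c (i.val+1) (i.val+2)
      else if i.val = m then c (m+1) (m+2) else c (m+2) 1 := by
    intro i
    rw [hB]
    simp only [Matrix.submatrix_apply, id]
    rcases Nat.lt_or_ge i.val m with hi | hi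
    · rw [M_rowlt i (r i) hi, if_pos hi]
      have : (r i).val = i.val + 1 := by
        rw [hr, coe_finRotate, if_neg (by intro hl; rw [hl, Fin.val_last] at hi; omega)]
      rw [if_pos this]
    · by_cases him : i.val = m
      · rw [if_neg (by omega), if_pos him]
        have : r i = ⟨m+1, by omega⟩ := by
          apply Fin.ext
          rw [hr, coe_finRotate, if_neg (by intro hl; rw [hl, Fin.val_last] at him; omega)]
          simp [him]
        rw [this]
        exact M_rowm_diag i him
      · have hil : i.val = m + 1 := by omega
        rw [if_neg (by omega), if_neg him]
        have : r i = 0 := by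
          rw [hr]
          have : i = Fin.last (m+1) := Fin.ext (by rw [Fin.val_last]; exact hil)
          rw [this]; simp [finRotate_succ_apply, Fin.last_add_one]
        rw [this, M_rowlast i 0 hil]
        simp
  -- compute det B
  have hdetB : B.det = 2^m * (∏ i ∈ Finset.range m, c (i+1) (i+2)) * (c (m+1) (m+2) * c (m+2) 1) := by
    rw [Matrix.det_of_lowerTriangular B B_triangular]
    have : ∀ i : Fin (m+2), B i i =
        (fun k : ℕ => if k < m then 2 * c (k+1) (k+2)
          else if k = m then c (m+1) (m+2) else c (m+2) 1) i.val := fun i => B_diag i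
    calc ∏ i : Fin (m+2), B i i
        = ∏ i ∈ Finset.range (m+2), (fun k : ℕ => if k < m then 2 * c (k+1) (k+2)
            else if k = m then c (m+1) (m+2) else c (m+2) 1) i := by
          rw [← Fin.prod_univ_eq_prod_range]
          exact Finset.prod_congr rfl (fun i _ => this i)
      _ = 2^m * (∏ i ∈ Finset.range m, c (i+1) (i+2)) * (c (m+1) (m+2) * c (m+2) 1) := by
          rw [Finset.prod_range_succ, Finset.prod_range_succ]
          have e1 : (∏ x ∈ Finset.range m, (if x < m then 2 * c (x+1) (x+2)
              else if x = m then c (m+1) (m+2) else c (m+2) 1))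
              = ∏ x ∈ Finset.range m, 2 * c (x+1) (x+2) :=
            Finset.prod_congr rfl (fun x hx => if_pos (Finset.mem_range.mp hx))
          rw [e1, if_neg (lt_irrefl m), if_pos (rfl : m = m),
            if_neg (show ¬ m + 1 < m by omega), if_neg (show ¬ m + 1 = m by omega)]
          rw [Finset.prod_mul_distrib, Finset.prod_const, Finset.card_range]
          ring
  -- relate det FC and det B
  have hdetM : M.det = (FC m c).det := by
    rw [hM, Matrix.det_mul, FA_det, one_mul]
  have hsign : ((Equiv.Perm.sign r : ℤ) : K) = (-1)^(m+1) := by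
    rw [hr, sign_finRotate]; push_cast; ring
  have hperm : B.det = (-1:K)^(m+1) * M.det := by
    rw [hB, Matrix.det_permute', hsign]
  have hdet : (FC m c).det = (-1:K)^(m+1) * B.det := by
    rw [hperm, ← hdetM, ← mul_assoc, ← mul_pow]
    norm_num
  rw [hdet, hdetB]
  rw [maldonado_prod_Icc (fun i => c i (i+1)) (m+1), Finset.prod_range_succ]
  rw [hsym (m+2) 1]
  have : ∀ i, c (i+1) (i+1+1) = c (i+1) (i+2) := fun i => by norm_num
  rw [Finset.prod_congr rfl (fun i _ => this i)]
  have h2 : (-2:K)^m = (-1)^m * 2^m := by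
    rw [show (-2:K) = -1 * 2 by norm_num, mul_pow]
  rw [h2]
  ring
end

section
/- Let K be a field and let f : diag(R) → K be a weak frieze on an (r+s-2)-gon R with respect to the dissection D = {d} where d = {r-1, r} glues an r-gon P (vertices 1,…,r) and an s-gon Q (vertices r-1, r, r+1,…,r+s-2), with c = f(d) ≠ 0. Let M_f be the associated weak frieze matrix. Performing on M_f the row operations row_i ↦ row_i - c^{-1}f(i,r-1)·row_r - c^{-1}f(i,r)·row_{r-1} for 1 ≤ i ≤ r-2 yields a matrix whose (i,j)-entries vanish for all 1 ≤ i ≤ r-2 and all j ∈ {r-1, r, r+1, …, r+s-2}. -/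
/-- The key vanishing lemma in the proof of Theorem 3.3: after the row operations
`row_i ↦ row_i - c⁻¹ f(i,r-1)·row_r - c⁻¹ f(i,r)·row_{r-1}` (for `1 ≤ i ≤ r-2`) on the
weak frieze matrix `M_f` of the glued `(r+s-2)`-gon, the `(i,j)`-entries vanish for all
`1 ≤ i ≤ r-2` and `r-1 ≤ j ≤ r+s-2`. -/
theorem weak_frieze_row_operations_vanish {K : Type*} [Field K] (r s : ℕ)
    (hr : 3 ≤ r) (hs : 3 ≤ s)
    (f : ℕ → ℕ → K)
    (hsym : ∀ i j, f i j = f j i)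
    (hc : f (r - 1) r ≠ 0)
    (hPtolemy : ∀ i j, 1 ≤ i → i ≤ r - 2 → r + 1 ≤ j → j ≤ r + s - 2 →
      f (r - 1) r * f i j = f i (r - 1) * f r j + f i r * f (r - 1) j) :
    ∀ i j, 1 ≤ i → i ≤ r - 2 → r - 1 ≤ j → j ≤ r + s - 2 →
      (fun a b => if a = b then (0 : K) else f a b) i j
        - (f (r - 1) r)⁻¹ * f i (r - 1) * (fun a b => if a = b then (0 : K) else f a b) r j
        - (f (r - 1) r)⁻¹ * f i r * (fun a b => if a = b then (0 : K) else f a b) (r - 1) j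
        = 0 := by
  intro i j hi1 hi2 hj1 hj2
  simp only []
  have hir1 : i ≠ r - 1 := by omega
  have hir : i ≠ r := by omega
  have hij : i ≠ j := by omega
  have hrr1 : r ≠ r - 1 := by omega
  rcases eq_or_lt_of_le hj1 with hj | hj
  · -- j = r - 1
    subst hj
    rw [if_neg hij, if_neg hrr1, if_pos rfl, hsym r (r-1)]
    field_simp
    ring
  rcases Nat.lt_or_ge j (r + 1) with hj' | hj'
  · -- j = r
    have hjr : r = j := by omega
    subst hjr
    rw [if_neg hij, if_pos rfl, if_neg hrr1.symm]
    field_simp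
    ring
  · -- j ≥ r + 1
    rw [if_neg hij, if_neg (by omega : r ≠ j), if_neg (by omega : r - 1 ≠ j)]
    have h := hPtolemy i j hi1 hi2 hj' hj2
    field_simp
    linear_combination h
end

section
/- Let c_{i,j} for 1 ≤ i < j ≤ n be nonzero elements of a field forming a tame frieze pattern with coefficients extended by glide symmetry c_{i,j} = c_{j, n+i} to all i < j in ℤ. If all adjacent 2×2 determinants satisfy c_{i,j}c_{i+1,j+1} - c_{i,j+1}c_{i+1,j} = c_{i+1, n+i}·c_{j,j+1}, then the values on diagonals of the n-gon satisfy all Ptolemy relations: c_{i,k}c_{j,ℓ} = c_{i,ℓ}c_{j,k} + c_{i,j}c_{k,ℓ} for 1 ≤ i ≤ j ≤ k ≤ ℓ ≤ n. -/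
/-- (Cuntz–Holm–Jørgensen, Theorem 3.3) A tame frieze pattern with coefficients, given by
entries `c i j` (for `i ≤ j ≤ n + i` in `ℤ`) with zero diagonal, nonzero entries
`c i j ≠ 0` for `1 ≤ i < j ≤ n`, glide symmetry `c i j = c j (n+i)`, and all adjacent
complete `2×2` determinants equal to `c (i+1) (n+i) * c j (j+1)`, satisfies all Ptolemy
relations on the diagonals of the `n`-gon. -/
theorem frieze_pattern_ptolemy {K : Type*} [Field K] (n : ℕ) (hn : 3 ≤ n)
    (c : ℤ → ℤ → K)
    (hdiag : ∀ i : ℤ, c i i = 0)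
    (hnonzero : ∀ i j : ℤ, 1 ≤ i → i < j → j ≤ (n : ℤ) → c i j ≠ 0)
    (hglide : ∀ i j : ℤ, i < j → c i j = c j ((n : ℤ) + i))
    (hrule : ∀ i j : ℤ, i + 1 ≤ j → j ≤ (n : ℤ) + i - 1 →
      c i j * c (i + 1) (j + 1) - c i (j + 1) * c (i + 1) j
        = c (i + 1) ((n : ℤ) + i) * c j (j + 1)) :
    ∀ i j k l : ℤ, 1 ≤ i → i ≤ j → j ≤ k → k ≤ l → l ≤ (n : ℤ) →
      c i k * c j l = c i l * c j k + c i j * c k l := by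
  -- periodicity
  have per : ∀ a b : ℤ, a < b → b ≤ (n:ℤ) + a → c a b = c (a + n) (b + n) := by
    intro a b hab hb
    rcases lt_or_eq_of_le hb with h | h
    · rw [hglide a b hab, hglide b ((n:ℤ) + a) h, show (n:ℤ) + a = a + n by ring,
        show (n:ℤ) + b = b + n by ring]
    · have e1 : c a b = 0 := by
        rw [h, hglide a ((n:ℤ)+a) (by omega), hdiag]
      have e2 : c (a+n) (b+n) = 0 := by
        rw [hglide (a+n) (b+n) (by omega), show (n:ℤ) + (a+n) = b + n by omega, hdiag]
      rw [e1, e2]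
  -- extended nonvanishing
  have nz : ∀ a b : ℤ, 1 ≤ a → a < b → b < (n:ℤ) + a → c a b ≠ 0 := by
    have H : ∀ q : ℕ, ∀ a b : ℤ, a ≤ (q:ℤ) → 1 ≤ a → a < b → b < (n:ℤ) + a → c a b ≠ 0 := by
      intro q
      induction q with
      | zero => intro a b ha h1 _ _; omega
      | succ q ih =>
        intro a b ha h1 hab hb
        by_cases hq : a ≤ (q:ℤ)
        · exact ih a b hq h1 hab hb
        · by_cases han : a ≤ (n:ℤ)
          · by_cases hbn : b ≤ (n:ℤ)
            · exact hnonzero a b h1 hab hbn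
            · have hg := hglide (b - n) a (by omega)
              rw [show (n:ℤ) + (b - n) = b by ring] at hg
              rw [← hg]
              exact hnonzero (b - n) a (by omega) (by omega) (by omega)
          · have hp := per (a - n) (b - n) (by omega) (by omega)
            rw [show a - (n:ℤ) + n = a by ring, show b - (n:ℤ) + n = b by ring] at hp
            rw [← hp]
            exact ih (a - n) (b - n) (by omega) (by omega) (by omega) (by omega)
    intro a b h1 hab hb
    exact H a.toNat a b (by omega) h1 hab hb
  -- the local rule, rewritten with glide
  have rule' : ∀ a b : ℤ, a + 1 ≤ b → b ≤ (n:ℤ) + a - 1 →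
      c a b * c (a+1) (b+1) - c a (b+1) * c (a+1) b = c a (a+1) * c b (b+1) := by
    intro a b hb1 hb2
    rw [hglide a (a+1) (by omega)]
    exact hrule a b hb1 hb2
  -- the three-term linear recurrence between consecutive columns
  have crec : ∀ L m : ℤ, 2 ≤ L → 1 ≤ m → L - (n:ℤ) + 1 ≤ m → m ≤ L - 1 →
      c m (L+1) = (c (L-1) (L+1) / c (L-1) L) * c m L
        + (-(c L (L+1)) / c (L-1) L) * c m (L-1) := by
    intro L m hL hm1 hm2 hm3
    have hden : c (L-1) L ≠ 0 := nz (L-1) L (by omega) (by omega) (by omega)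
    have hs : (-(c L (L+1)) / c (L-1) L) * c (L-1) L = -(c L (L+1)) := by
      field_simp
    have H : ∀ d : ℕ, ∀ m : ℤ, m = L - 1 - (d:ℤ) → 1 ≤ m → L - (n:ℤ) + 1 ≤ m →
        c m (L+1) = (c (L-1) (L+1) / c (L-1) L) * c m L
          + (-(c L (L+1)) / c (L-1) L) * c m (L-1) := by
      intro d
      induction d with
      | zero =>
        intro m hm _ _
        have hm' : m = L - 1 := by omega
        subst hm'
        rw [hdiag (L-1), mul_zero, add_zero, div_mul_cancel₀ _ hden]
      | succ d ih =>
        intro m hm hma hmb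
        have E1 := ih (m+1) (by omega) (by omega) (by omega)
        have R1 := rule' m (L-1) (by omega) (by omega)
        rw [show L-1+1 = L by ring] at R1
        have R2 := rule' m L (by omega) (by omega)
        have hz : c (m+1) L ≠ 0 := nz (m+1) L (by omega) (by omega) (by omega)
        have key : c m (L+1) * c (m+1) L
            = ((c (L-1) (L+1) / c (L-1) L) * c m L
              + (-(c L (L+1)) / c (L-1) L) * c m (L-1)) * c (m+1) L := by
          linear_combination c m L * E1 - R2 - (-(c L (L+1)) / c (L-1) L) * R1
            - c m (m+1) * hs
        exact mul_right_cancel₀ hz key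
    exact H (L - 1 - m).toNat m (by omega) hm1 hm2
  -- Ptolemy relations for adjacent rows (j = i + 1 case)
  have lemA : ∀ a k0 l0 : ℤ, 1 ≤ a → a + 1 ≤ k0 → k0 ≤ l0 → l0 ≤ (n:ℤ) →
      c a k0 * c (a+1) l0 = c a l0 * c (a+1) k0 + c a (a+1) * c k0 l0 := by
    intro a k0 l0 ha hak hkl hln
    have H : ∀ d : ℕ, ∀ l0 : ℤ, l0 = k0 + (d:ℤ) → l0 ≤ (n:ℤ) →
        c a k0 * c (a+1) l0 = c a l0 * c (a+1) k0 + c a (a+1) * c k0 l0 := by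
      intro d
      induction d using Nat.strong_induction_on with
      | _ d ih =>
        intro l0 hl hln
        rcases d with _ | d
        · rw [show l0 = k0 by omega, hdiag k0]
          ring
        rcases d with _ | d
        · have R := rule' a k0 (by omega) (by omega)
          rw [show l0 = k0 + 1 by omega]
          linear_combination R
        · have hA := ih (d+1) (by omega) (l0-1) (by omega) (by omega)
          have hB := ih d (by omega) (l0-2) (by omega) (by omega)
          have Ri := crec (l0-1) a (by omega) (by omega) (by omega) (by omega)
          have Ri1 := crec (l0-1) (a+1) (by omega) (by omega) (by omega) (by omega)
          have Rk := crec (l0-1) k0 (by omega) (by omega) (by omega) (by omega)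
          rw [show l0-1+1 = l0 by ring, show l0-1-1 = l0-2 by ring] at Ri Ri1 Rk
          linear_combination (c (l0-2) l0 / c (l0-2) (l0-1)) * hA
            + (-(c (l0-1) l0) / c (l0-2) (l0-1)) * hB
            + c a k0 * Ri1 - c (a+1) k0 * Ri - c a (a+1) * Rk
    exact H (l0 - k0).toNat l0 (by omega) hln
  -- main proof
  intro i j k l h1 h2 h3 h4 h5
  have H : ∀ d : ℕ, ∀ j : ℤ, j = i + (d:ℤ) → j ≤ k →
      c i k * c j l = c i l * c j k + c i j * c k l := by
    intro d
    induction d using Nat.strong_induction_on with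
    | _ d ih =>
      intro j hj hjk
      rcases d with _ | d
      · rw [show j = i by omega, hdiag i]
        ring
      rcases d with _ | d
      · rw [show j = i + 1 by omega]
        exact lemA i k l h1 (by omega) h4 h5
      · by_cases hjk' : j = k
        · rw [hjk', hdiag k]
          ring
        · have hA := ih (d+1) (by omega) (j-1) (by omega) (by omega)
          have hB := ih d (by omega) (j-2) (by omega) (by omega)
          have Ri := crec (j-1) i (by omega) h1 (by omega) (by omega)
          rw [show j-1+1 = j by ring, show j-1-1 = j-2 by ring] at Ri
          have Rk := crec ((n:ℤ)+j-1) k (by omega) (by omega) (by omega) (by omega)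
          have Rl := crec ((n:ℤ)+j-1) l (by omega) (by omega) (by omega) (by omega)
          rw [show (n:ℤ)+j-1+1 = (n:ℤ)+j by ring, show (n:ℤ)+j-1-1 = (n:ℤ)+j-2 by ring]
            at Rk Rl
          have g1k : c k ((n:ℤ)+j) = c j k := (hglide j k (by omega)).symm
          have g2k : c k ((n:ℤ)+j-1) = c (j-1) k := by
            have hg := hglide (j-1) k (by omega)
            rw [show (n:ℤ)+(j-1) = (n:ℤ)+j-1 by ring] at hg
            exact hg.symm
          have g3k : c k ((n:ℤ)+j-2) = c (j-2) k := by
            have hg := hglide (j-2) k (by omega)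
            rw [show (n:ℤ)+(j-2) = (n:ℤ)+j-2 by ring] at hg
            exact hg.symm
          have g1l : c l ((n:ℤ)+j) = c j l := (hglide j l (by omega)).symm
          have g2l : c l ((n:ℤ)+j-1) = c (j-1) l := by
            have hg := hglide (j-1) l (by omega)
            rw [show (n:ℤ)+(j-1) = (n:ℤ)+j-1 by ring] at hg
            exact hg.symm
          have g3l : c l ((n:ℤ)+j-2) = c (j-2) l := by
            have hg := hglide (j-2) l (by omega)
            rw [show (n:ℤ)+(j-2) = (n:ℤ)+j-2 by ring] at hg
            exact hg.symm
          rw [g1k, g2k, g3k] at Rk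
          rw [g1l, g2l, g3l] at Rl
          have p1 : c ((n:ℤ)+j-2) ((n:ℤ)+j) = c (j-2) j := by
            have hp := per (j-2) j (by omega) (by omega)
            rw [show j-2+(n:ℤ) = (n:ℤ)+j-2 by ring, show j+(n:ℤ) = (n:ℤ)+j by ring] at hp
            exact hp.symm
          have p2 : c ((n:ℤ)+j-2) ((n:ℤ)+j-1) = c (j-2) (j-1) := by
            have hp := per (j-2) (j-1) (by omega) (by omega)
            rw [show j-2+(n:ℤ) = (n:ℤ)+j-2 by ring, show j-1+(n:ℤ) = (n:ℤ)+j-1 by ring] at hp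
            exact hp.symm
          have p3 : c ((n:ℤ)+j-1) ((n:ℤ)+j) = c (j-1) j := by
            have hp := per (j-1) j (by omega) (by omega)
            rw [show j-1+(n:ℤ) = (n:ℤ)+j-1 by ring, show j+(n:ℤ) = (n:ℤ)+j by ring] at hp
            exact hp.symm
          rw [p1, p2, p3] at Rk Rl
          linear_combination (c (j-2) j / c (j-2) (j-1)) * hA
            + (-(c (j-1) j) / c (j-2) (j-1)) * hB
            + c i k * Rl - c i l * Rk - c k l * Ri
  exact H (j - i).toNat j (by omega) h3
end
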